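/- Let a < b be reals, q : [a, b] → ℝ differentiable, and u : [a, b] → ℝ twice differentiable such that −u''(x) + (q·u)'(x) = 0 for all x ∈ [a, b] and u(a) = u(b) = 0. Then u(x) = 0 for all x ∈ [a, b]. -/

import Mathlib

/-- uniqueness for the second-order homogeneous boundary value
problem `−u'' + (q·u)' = 0` on `[a, b]` with `u(a) = u(b) = 0`.  Here `u'` and
`u''` are the first and second derivatives of `u`, `q'` the derivative of `q`,
so that `(q·u)' = q'·u + q·u'` by the product rule. -/
theorem second_order_bvp_uniqueness
    (a b : ℝ) (hab : a < b)
    (q q' u u' u'' : ℝ → ℝ)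
    (hq : ∀ x ∈ Set.Icc a b, HasDerivWithinAt q (q' x) (Set.Icc a b) x)
    (hu : ∀ x ∈ Set.Icc a b, HasDerivWithinAt u (u' x) (Set.Icc a b) x)
    (hu' : ∀ x ∈ Set.Icc a b, HasDerivWithinAt u' (u'' x) (Set.Icc a b) x)
    (hode : ∀ x ∈ Set.Icc a b,
      -u'' x + (q' x * u x + q x * u' x) = 0)
    (hua : u a = 0) (hub : u b = 0) :
    ∀ x ∈ Set.Icc a b, u x = 0 := by
  have hmemab : a ∈ Set.Icc a b := Set.left_mem_Icc.2 hab.le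
  have hmembb : b ∈ Set.Icc a b := Set.right_mem_Icc.2 hab.le
  -- continuity facts
  have hqc : ContinuousOn q (Set.Icc a b) := fun x hx => (hq x hx).continuousWithinAt
  have huc : ContinuousOn u (Set.Icc a b) := fun x hx => (hu x hx).continuousWithinAt
  have hu'c : ContinuousOn u' (Set.Icc a b) := fun x hx => (hu' x hx).continuousWithinAt
  -- g = u' - q u has zero derivative, hence is constant c
  set g : ℝ → ℝ := fun x => u' x - q x * u x with hgdef
  have hg : ∀ x ∈ Set.Icc a b, HasDerivWithinAt g 0 (Set.Icc a b) x := by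
    intro x hx
    have h := (hu' x hx).sub ((hq x hx).mul (hu x hx))
    have : u'' x - (q' x * u x + q x * u' x) = 0 := by linarith [hode x hx]
    rw [this] at h; exact h
  have hgc : ContinuousOn g (Set.Icc a b) := fun x hx => (hg x hx).continuousWithinAt
  have hgconst : ∀ x ∈ Set.Icc a b, g x = g a :=
    constant_of_has_deriv_right_zero hgc (fun x hx =>
      (hg x (Set.Ico_subset_Icc_self hx)).mono_of_mem_nhdsWithin (Icc_mem_nhdsGE_of_mem hx))
  set c : ℝ := g a with hcdef
  have hode1 : ∀ x ∈ Set.Icc a b, u' x = q x * u x + c := by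
    intro x hx
    have := hgconst x hx
    simp only [hgdef] at this
    linarith
  -- Q = antiderivative of q
  set Q : ℝ → ℝ := fun x => ∫ t in a..x, q t with hQdef
  have hQ : ∀ x ∈ Set.Icc a b, HasDerivWithinAt Q (q x) (Set.Icc a b) x := by
    intro x hx
    haveI : Fact (x ∈ Set.Icc a b) := ⟨hx⟩
    exact intervalIntegral.integral_hasDerivWithinAt_right
      ((hqc.mono (Set.uIcc_subset_Icc hmemab hx)).intervalIntegrable)
      (hqc.stronglyMeasurableAtFilter_nhdsWithin measurableSet_Icc x)
      (hqc x hx)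
  -- w = u * exp(-Q) has derivative c * exp(-Q)
  set w : ℝ → ℝ := fun x => u x * Real.exp (-Q x) with hwdef
  have hw : ∀ x ∈ Set.Icc a b, HasDerivWithinAt w (c * Real.exp (-Q x)) (Set.Icc a b) x := by
    intro x hx
    have h := (hu x hx).mul ((hQ x hx).neg.exp)
    have heq : c * Real.exp (-Q x) = u' x * Real.exp (-Q x) + u x * (Real.exp (-Q x) * -q x) := by
      rw [hode1 x hx]; ring
    rw [hwdef, heq]
    exact h
  have hwc : ContinuousOn w (Set.Icc a b) := fun x hx => (hw x hx).continuousWithinAt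
  have hwa : w a = 0 := by simp [hwdef, hua]
  have hwb : w b = 0 := by simp [hwdef, hub]
  -- c = 0, else w is strictly monotone contradicting w a = w b
  have hc0 : c = 0 := by
    rcases lt_trichotomy c 0 with hc | hc | hc
    · have hanti : StrictAntiOn w (Set.Icc a b) := by
        apply strictAntiOn_of_hasDerivWithinAt_neg (f' := fun x => c * Real.exp (-Q x))
          (convex_Icc a b) hwc
        · intro x hx
          rw [interior_Icc] at hx ⊢
          exact (hw x (Set.Ioo_subset_Icc_self hx)).mono Set.Ioo_subset_Icc_self
        · intro x hx
          exact mul_neg_of_neg_of_pos hc (Real.exp_pos _)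
      have := hanti hmemab hmembb hab
      rw [hwa, hwb] at this; exact absurd this (lt_irrefl 0)
    · exact hc
    · have hmono : StrictMonoOn w (Set.Icc a b) := by
        apply strictMonoOn_of_hasDerivWithinAt_pos (f' := fun x => c * Real.exp (-Q x))
          (convex_Icc a b) hwc
        · intro x hx
          rw [interior_Icc] at hx ⊢
          exact (hw x (Set.Ioo_subset_Icc_self hx)).mono Set.Ioo_subset_Icc_self
        · intro x hx
          exact mul_pos hc (Real.exp_pos _)
      have := hmono hmemab hmembb hab
      rw [hwa, hwb] at this; exact absurd this (lt_irrefl 0)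
  -- hence w' = 0, so w is constant 0, so u = 0
  have hwconst : ∀ x ∈ Set.Icc a b, w x = w a :=
    constant_of_has_deriv_right_zero hwc (fun x hx => by
      have := (hw x (Set.Ico_subset_Icc_self hx)).mono_of_mem_nhdsWithin
        (Icc_mem_nhdsGE_of_mem hx)
      simpa [hc0] using this)
  intro x hx
  have := hwconst x hx
  rw [hwa] at this
  have hexp : Real.exp (-Q x) ≠ 0 := (Real.exp_pos _).ne'
  exact (mul_eq_zero.1 this).resolve_right hexp
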